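/- arXiv:2101.04962 — 2 statements merged into one kernel-verified Lean document; each statement's English description precedes it below -/
import Mathlib

section
/- Let S be a state space symmetry from the density matrices on ℂ^m to the density matrices on ℂ^n. Then for every rank-one orthogonal projection P on ℂ^m (pure state), S(P) is a rank-one orthogonal projection on ℂ^n, and the restriction of S to the set of rank-one projections is a bijection onto the set of rank-one projections on ℂ^n. -/
open scoped ComplexOrder Kronecker
open Matrix

noncomputable section

/-- The space of linear maps from `m × m` complex matrices to `n × n` complex matrices. -/
abbrev MatMap (m n : ℕ) := Matrix (Fin m) (Fin m) ℂ →ₗ[ℂ] Matrix (Fin n) (Fin n) ℂ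

/-- The Choi matrix `Choi(Q) = Σ_{i,j} Q(E_{ij}) ⊗ E_{ij}` of a linear map between
matrix spaces. -/
def choi {m n : ℕ} (Q : MatMap m n) : Matrix (Fin n × Fin m) (Fin n × Fin m) ℂ :=
  Matrix.of fun p q => Q (Matrix.single p.2 q.2 1) p.1 q.1

/-- A linear map is completely positive if its Choi matrix is positive semidefinite. -/
def IsCP {m n : ℕ} (Q : MatMap m n) : Prop := (choi Q).PosSemidef

/-- A quantum operation: a completely positive trace-non-increasing linear map. -/
def IsQOp {m n : ℕ} (Q : MatMap m n) : Prop :=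
  IsCP Q ∧ ∀ ρ : Matrix (Fin m) (Fin m) ℂ, ρ.PosSemidef → (Q ρ).trace ≤ ρ.trace

/-- A quantum channel: a completely positive trace-preserving linear map. -/
def IsChannel {m n : ℕ} (Q : MatMap m n) : Prop :=
  IsCP Q ∧ ∀ ρ : Matrix (Fin m) (Fin m) ℂ, (Q ρ).trace = ρ.trace

/-- A density matrix: positive semidefinite with unit trace. -/
def IsDensity {ι : Type*} [Fintype ι] (ρ : Matrix ι ι ℂ) : Prop :=
  ρ.PosSemidef ∧ ρ.trace = 1

/-- A rank-one orthogonal projection `|ψ⟩⟨ψ|` for a unit vector `ψ`. -/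
def IsRankOneProj {d : ℕ} (P : Matrix (Fin d) (Fin d) ℂ) : Prop :=
  ∃ ψ : Fin d → ℂ, star ψ ⬝ᵥ ψ = 1 ∧ P = Matrix.vecMulVec ψ (star ψ)

/-- A state space symmetry: a bijection between the sets of density matrices that
preserves convex combinations. -/
def IsStateSymmetry {ι κ : Type*} [Fintype ι] [Fintype κ]
    (S : Matrix ι ι ℂ → Matrix κ κ ℂ) : Prop :=
  Set.BijOn S {ρ | IsDensity ρ} {ρ | IsDensity ρ} ∧
  ∀ ρ σ : Matrix ι ι ℂ, IsDensity ρ → IsDensity σ → ∀ p : ℝ, 0 ≤ p → p ≤ 1 →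
    S ((p : ℂ) • ρ + ((1 - p : ℝ) : ℂ) • σ) = (p : ℂ) • S ρ + ((1 - p : ℝ) : ℂ) • S σ

/-- An operation space symmetry: a bijection between the sets of quantum operations that
preserves convex combinations and maps the zero map to the zero map. -/
def IsOpSymmetry {m n m' n' : ℕ} (S : MatMap m n → MatMap m' n') : Prop :=
  Set.BijOn S {Q | IsQOp Q} {Q | IsQOp Q} ∧
  (∀ Q R : MatMap m n, IsQOp Q → IsQOp R → ∀ p : ℝ, 0 ≤ p → p ≤ 1 →
    S ((p : ℂ) • Q + ((1 - p : ℝ) : ℂ) • R) = (p : ℂ) • S Q + ((1 - p : ℝ) : ℂ) • S R) ∧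
  S 0 = 0

/-- Transport of a square matrix along an equality of dimensions. -/
def castMat {m n : ℕ} (h : m = n) (A : Matrix (Fin m) (Fin m) ℂ) :
    Matrix (Fin n) (Fin n) ℂ :=
  Matrix.reindex (finCongr h) (finCongr h) A

/-- The unitary channel `ρ ↦ U ρ U†` as a linear map. -/
def adjAction {d : ℕ} (U : Matrix (Fin d) (Fin d) ℂ) : MatMap d d where
  toFun ρ := U * ρ * Uᴴ
  map_add' x y := by simp [Matrix.mul_add, Matrix.add_mul]
  map_smul' c x := by simp [Matrix.mul_smul, Matrix.smul_mul]

/-- The Hilbert–Schmidt adjoint of a linear map between matrix spaces; it is the unique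
linear map satisfying `Tr[A† Q(B)] = Tr[(Q†(A))† B]` for all `A`, `B`. -/
def hsAdjoint {m n : ℕ} (Q : MatMap m n) : MatMap n m where
  toFun A := Matrix.of fun i j => ((Q (Matrix.single i j 1))ᴴ * A).trace
  map_add' A B := by
    ext i j
    simp [Matrix.mul_add, Matrix.trace_add]
  map_smul' c A := by
    ext i j
    simp [Matrix.mul_smul, Matrix.trace_smul]

open scoped Classical in
/-- The positive semidefinite square root (junk value `0` on non-psd inputs). -/
noncomputable def psqrt {d : ℕ} (M : Matrix (Fin d) (Fin d) ℂ) : Matrix (Fin d) (Fin d) ℂ :=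
  if h : M.PosSemidef then
    h.1.eigenvectorUnitary.1 * diagonal ((↑) ∘ (√·) ∘ h.1.eigenvalues) *
      (star h.1.eigenvectorUnitary : Matrix (Fin d) (Fin d) ℂ)
  else 0

/-- The fidelity `F(ρ,σ) = (Tr[√(√ρ σ √ρ)])²` of two density matrices. -/
noncomputable def fidelity {d : ℕ} (ρ σ : Matrix (Fin d) (Fin d) ℂ) : ℝ :=
  ((psqrt (psqrt ρ * σ * psqrt ρ)).trace.re) ^ 2

/-- The double transpose `ρ ↦ [Φ(ρᵀ)]ᵀ` of a linear map between matrix spaces. -/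
def doubleTransposeMap {m n : ℕ} (Φ : MatMap m n) : MatMap m n where
  toFun ρ := (Φ ρᵀ)ᵀ
  map_add' x y := by simp
  map_smul' c x := by simp

/-- A time symmetric quantum operation: completely positive, with `Q†(I_n) ≤ I_m`
and `Q(I_m/m) ≤ I_n/n` in the Loewner order. -/
def IsTSOp {m n : ℕ} (Q : MatMap m n) : Prop :=
  IsCP Q ∧ ((1 : Matrix (Fin m) (Fin m) ℂ) - hsAdjoint Q 1).PosSemidef ∧
    ((n : ℂ)⁻¹ • (1 : Matrix (Fin n) (Fin n) ℂ)
      - Q ((m : ℂ)⁻¹ • (1 : Matrix (Fin m) (Fin m) ℂ))).PosSemidef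


section PureStateAux

variable {d : ℕ}

lemma vmv_mulVec (v w x : Fin d → ℂ) :
    (Matrix.vecMulVec v w) *ᵥ x = (w ⬝ᵥ x) • v := by
  ext i
  simp only [Matrix.vecMulVec, Matrix.mulVec, dotProduct, Matrix.of_apply,
    Pi.smul_apply, smul_eq_mul, Finset.sum_mul, Finset.mul_sum]
  exact Finset.sum_congr rfl fun j _ => by ring

lemma trace_vmv (v w : Fin d → ℂ) : (Matrix.vecMulVec v w).trace = w ⬝ᵥ v := by
  simp [Matrix.trace, Matrix.vecMulVec, dotProduct, mul_comm, Matrix.diag]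

lemma star_dot_comm (v x : Fin d → ℂ) : star x ⬝ᵥ v = star (star v ⬝ᵥ x) := by
  simp [dotProduct, mul_comm]

lemma psd_vmv (v : Fin d → ℂ) : (Matrix.vecMulVec v (star v)).PosSemidef := by
  refine Matrix.PosSemidef.of_dotProduct_mulVec_nonneg ?_ ?_
  · ext i j
    simp [Matrix.vecMulVec, Matrix.conjTranspose_apply, mul_comm]
  · intro x
    rw [vmv_mulVec, dotProduct_smul, star_dot_comm, smul_eq_mul, mul_comm]
    exact mul_star_self_nonneg _

lemma creal_nonneg {r : ℝ} (hr : 0 ≤ r) : (0:ℂ) ≤ (r:ℂ) := by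
  rw [Complex.le_def]; simp [hr]

lemma psd_rsmul {A : Matrix (Fin d) (Fin d) ℂ} (hA : A.PosSemidef) {r : ℝ} (hr : 0 ≤ r) :
    ((r:ℂ) • A).PosSemidef := by
  refine Matrix.PosSemidef.of_dotProduct_mulVec_nonneg ?_ ?_
  · rw [Matrix.IsHermitian, Matrix.conjTranspose_smul, hA.1.eq]
    simp
  · intro x
    rw [Matrix.smul_mulVec, dotProduct_smul, smul_eq_mul]
    exact mul_nonneg (creal_nonneg hr) (hA.dotProduct_mulVec_nonneg x)

-- row vec of psd times hermitian: star ψ ᵥ* ρ when ρ ψ = t ψ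
lemma starvec_vecMul {ρ : Matrix (Fin d) (Fin d) ℂ} (hH : ρ.IsHermitian)
    {ψ : Fin d → ℂ} {t : ℝ} (hev : ρ *ᵥ ψ = (t:ℂ) • ψ) :
    star ψ ᵥ* ρ = (t:ℂ) • star ψ := by
  have h := congrArg star hev
  rw [Matrix.star_mulVec, hH.eq] at h
  rw [h, star_smul]
  simp

lemma sub_eigen_psd {ρ : Matrix (Fin d) (Fin d) ℂ} (hρ : ρ.PosSemidef)
    {ψ : Fin d → ℂ} (hψ : star ψ ⬝ᵥ ψ = 1) {t : ℝ}
    (hev : ρ *ᵥ ψ = (t:ℂ) • ψ) :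
    (ρ - (t:ℂ) • Matrix.vecMulVec ψ (star ψ)).PosSemidef := by
  have hP := (by
    ext i j
    simp [Matrix.vecMulVec, Matrix.conjTranspose_apply, mul_comm] :
    (Matrix.vecMulVec ψ (star ψ)).IsHermitian)
  refine Matrix.PosSemidef.of_dotProduct_mulVec_nonneg ?_ ?_
  · rw [Matrix.IsHermitian, Matrix.conjTranspose_sub, hρ.1.eq, Matrix.conjTranspose_smul, hP.eq]
    simp
  · intro x
    set c : ℂ := star ψ ⬝ᵥ x with hc
    set y : Fin d → ℂ := x - c • ψ with hy
    have h1 : star ψ ⬝ᵥ ρ *ᵥ x = (t:ℂ) * c := by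
      rw [Matrix.dotProduct_mulVec, starvec_vecMul hρ.1 hev, smul_dotProduct, smul_eq_mul]
    have key : star x ⬝ᵥ (ρ - (t:ℂ) • Matrix.vecMulVec ψ (star ψ)) *ᵥ x
        = star y ⬝ᵥ ρ *ᵥ y := by
      have hsy : star y = star x - star c • star ψ := by
        rw [hy, star_sub, star_smul]
      have hρy : ρ *ᵥ y = ρ *ᵥ x - (c * t) • ψ := by
        rw [hy, Matrix.mulVec_sub, Matrix.mulVec_smul, hev, smul_smul]
      rw [Matrix.sub_mulVec, Matrix.smul_mulVec, vmv_mulVec, hsy, hρy]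
      simp only [dotProduct_sub, sub_dotProduct, dotProduct_smul,
        smul_dotProduct, smul_eq_mul, ← hc, h1, hψ]
      ring
    rw [key]
    exact hρ.dotProduct_mulVec_nonneg y

lemma eq_of_dominated {σ : Matrix (Fin d) (Fin d) ℂ} (hσ : σ.PosSemidef)
    {ψ : Fin d → ℂ} (hψ : star ψ ⬝ᵥ ψ = 1) {p : ℝ} (hp : 0 < p)
    (hdom : (Matrix.vecMulVec ψ (star ψ) - (p:ℂ) • σ).PosSemidef)
    (htr : σ.trace = 1) : σ = Matrix.vecMulVec ψ (star ψ) := by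
  have ha : ∀ y : Fin d → ℂ, star ψ ⬝ᵥ y = 0 → σ *ᵥ y = 0 := by
    intro y hy
    have h0 : star y ⬝ᵥ (Matrix.vecMulVec ψ (star ψ) - (p:ℂ) • σ) *ᵥ y
        = -((p:ℂ) * (star y ⬝ᵥ σ *ᵥ y)) := by
      rw [Matrix.sub_mulVec, dotProduct_sub, vmv_mulVec, hy,
        Matrix.smul_mulVec, dotProduct_smul]
      simp
    have h2 := hdom.dotProduct_mulVec_nonneg y
    rw [h0] at h2
    have h3 := hσ.dotProduct_mulVec_nonneg y
    set z := star y ⬝ᵥ σ *ᵥ y with hz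
    rw [Complex.le_def] at h2 h3
    simp only [Complex.zero_re, Complex.zero_im, Complex.neg_re, Complex.neg_im,
      Complex.mul_re, Complex.mul_im, Complex.ofReal_re, Complex.ofReal_im] at h2 h3
    apply (hσ.dotProduct_mulVec_zero_iff y).mp
    rw [← hz]
    apply Complex.ext
    · rw [Complex.zero_re]
      nlinarith [h2.1, h3.1]
    · simpa using h3.2.symm
  set μ : ℂ := star ψ ⬝ᵥ σ *ᵥ ψ with hμ
  set w : Fin d → ℂ := σ *ᵥ ψ - μ • ψ with hw
  have hwperp : star ψ ⬝ᵥ w = 0 := by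
    rw [hw, dotProduct_sub, dotProduct_smul, hψ, ← hμ]
    simp
  have hσw : σ *ᵥ w = 0 := ha w hwperp
  have hw0 : w = 0 := by
    apply dotProduct_star_self_eq_zero.mp
    have e1 : star w ⬝ᵥ σ *ᵥ ψ = 0 := by
      rw [Matrix.dotProduct_mulVec]
      have : star w ᵥ* σ = 0 := by
        have := congrArg star hσw
        rw [Matrix.star_mulVec, hσ.1.eq] at this
        simpa using this
      rw [this]
      simp
    have e2 : star w ⬝ᵥ ψ = 0 := by
      rw [star_dot_comm, hwperp]
      simp
    calc star w ⬝ᵥ w = star w ⬝ᵥ σ *ᵥ ψ - μ * (star w ⬝ᵥ ψ) := by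
          rw [hw]
          rw [dotProduct_sub, dotProduct_smul, smul_eq_mul]
      _ = 0 := by rw [e1, e2]; simp
  have hb : σ *ᵥ ψ = μ • ψ := by
    rw [hw] at hw0
    exact sub_eq_zero.mp hw0
  have hcvec : ∀ x, σ *ᵥ x = ((star ψ ⬝ᵥ x) * μ) • ψ := by
    intro x
    have hyperp : star ψ ⬝ᵥ (x - (star ψ ⬝ᵥ x) • ψ) = 0 := by
      rw [dotProduct_sub, dotProduct_smul, hψ]
      simp
    have h5 := ha _ hyperp
    rw [Matrix.mulVec_sub, Matrix.mulVec_smul, hb, sub_eq_zero] at h5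
    rw [h5, smul_smul]
  have hμ1 : σ = μ • Matrix.vecMulVec ψ (star ψ) := by
    ext i j
    have h6 := congrFun (hcvec (Pi.single j 1)) i
    simp only [Matrix.mulVec_single, MulOpposite.op_one, one_smul, Matrix.col_apply, mul_one] at h6
    rw [h6]
    simp [Matrix.vecMulVec, dotProduct_single, Pi.smul_apply, smul_eq_mul]
    ring
  have hμval : μ = 1 := by
    have h7 := htr
    rw [hμ1, Matrix.trace_smul, trace_vmv, hψ, smul_eq_mul, mul_one] at h7
    exact h7
  rw [hμ1, hμval, one_smul]

/-- Extremality in the convex set of density matrices. -/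
def ExtremeState {d : ℕ} (ρ : Matrix (Fin d) (Fin d) ℂ) : Prop :=
  ∀ σ τ : Matrix (Fin d) (Fin d) ℂ, IsDensity σ → IsDensity τ → ∀ p : ℝ, 0 < p → p < 1 →
    ρ = (p : ℂ) • σ + ((1 - p : ℝ) : ℂ) • τ → σ = τ

lemma trace_eq_sum_eigen {ρ : Matrix (Fin d) (Fin d) ℂ} (hH : ρ.IsHermitian) :
    ρ.trace = ∑ i, (hH.eigenvalues i : ℂ) := by
  conv_lhs => rw [hH.spectral_theorem, Unitary.conjStarAlgAut_apply]
  rw [Matrix.trace_mul_cycle, Matrix.mem_unitaryGroup_iff'.mp (hH.eigenvectorUnitary).2,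
    one_mul, Matrix.trace_diagonal]
  simp

lemma eigBasis_unit {ρ : Matrix (Fin d) (Fin d) ℂ} (hH : ρ.IsHermitian) (k : Fin d) :
    star ⇑(hH.eigenvectorBasis k) ⬝ᵥ ⇑(hH.eigenvectorBasis k) = 1 := by
  have h := hH.eigenvectorBasis.orthonormal.1 k
  have h2 : (inner ℂ (hH.eigenvectorBasis k) (hH.eigenvectorBasis k) : ℂ) = 1 := by
    rw [inner_self_eq_norm_sq_to_K, h]
    norm_num
  rw [EuclideanSpace.inner_eq_star_dotProduct, dotProduct_comm] at h2
  exact h2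

lemma eigBasis_mulVec {ρ : Matrix (Fin d) (Fin d) ℂ} (hH : ρ.IsHermitian) (k : Fin d) :
    ρ *ᵥ ⇑(hH.eigenvectorBasis k) = ((hH.eigenvalues k : ℂ)) • ⇑(hH.eigenvectorBasis k) := by
  have h := hH.mulVec_eigenvectorBasis k
  rw [h]
  ext i
  simp [Complex.real_smul]

lemma ext_density_rankOne {ρ : Matrix (Fin d) (Fin d) ℂ} (hρ : IsDensity ρ)
    (hext : ExtremeState ρ) : IsRankOneProj ρ := by
  have hH := hρ.1.1
  have hnn : ∀ i, 0 ≤ hH.eigenvalues i := hρ.1.eigenvalues_nonneg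
  have hsum : ∑ i, hH.eigenvalues i = 1 := by
    have h := trace_eq_sum_eigen hH
    rw [hρ.2] at h
    exact_mod_cast h.symm
  by_cases hcase : ∃ k, 0 < hH.eigenvalues k ∧ hH.eigenvalues k < 1
  · exfalso
    obtain ⟨k, hk0, hk1⟩ := hcase
    set t := hH.eigenvalues k with ht
    set u := ⇑(hH.eigenvectorBasis k) with hu
    have hu1 : star u ⬝ᵥ u = 1 := eigBasis_unit hH k
    have hev : ρ *ᵥ u = (t:ℂ) • u := eigBasis_mulVec hH k
    have hP1d : IsDensity (Matrix.vecMulVec u (star u)) :=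
      ⟨psd_vmv u, by rw [trace_vmv, hu1]⟩
    set τ := (((1 - t)⁻¹ : ℝ) : ℂ) • (ρ - (t:ℂ) • Matrix.vecMulVec u (star u)) with hτ
    have h1t : (1:ℝ) - t ≠ 0 := by linarith
    have hτpsd : τ.PosSemidef :=
      psd_rsmul (sub_eigen_psd hρ.1 hu1 hev) (inv_nonneg.mpr (by linarith))
    have hτtr : τ.trace = 1 := by
      rw [hτ, Matrix.trace_smul, Matrix.trace_sub, Matrix.trace_smul, hρ.2, trace_vmv, hu1,
        smul_eq_mul, smul_eq_mul, mul_one, ← Complex.ofReal_one, ← Complex.ofReal_sub,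
        ← Complex.ofReal_mul, inv_mul_cancel₀ h1t, Complex.ofReal_one]
    have hdecomp : ρ = (t:ℂ) • Matrix.vecMulVec u (star u) + ((1 - t : ℝ) : ℂ) • τ := by
      rw [hτ, smul_smul, ← Complex.ofReal_mul, mul_inv_cancel₀ h1t, Complex.ofReal_one, one_smul]
      abel
    have heq := hext _ τ hP1d ⟨hτpsd, hτtr⟩ t hk0 hk1 hdecomp
    have hτu : τ *ᵥ u = 0 := by
      rw [hτ, Matrix.smul_mulVec, Matrix.sub_mulVec, hev, Matrix.smul_mulVec,
        vmv_mulVec, hu1, one_smul]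
      simp
    have hP1u : Matrix.vecMulVec u (star u) *ᵥ u = u := by
      rw [vmv_mulVec, hu1, one_smul]
    rw [heq, hτu] at hP1u
    rw [← hP1u] at hu1
    simp at hu1
  · push_neg at hcase
    have h01 : ∀ i, hH.eigenvalues i = 0 ∨ 1 ≤ hH.eigenvalues i := by
      intro i
      rcases eq_or_lt_of_le (hnn i) with h | h
      · exact Or.inl h.symm
      · exact Or.inr (hcase i h)
    obtain ⟨k, hk⟩ : ∃ k, hH.eigenvalues k ≠ 0 := by
      by_contra hno
      push_neg at hno
      rw [Finset.sum_eq_zero (fun i _ => hno i)] at hsum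
      norm_num at hsum
    have hk1 : 1 ≤ hH.eigenvalues k := (h01 k).resolve_left hk
    have hsplit : hH.eigenvalues k + ∑ i ∈ Finset.univ.erase k, hH.eigenvalues i = 1 := by
      rw [Finset.add_sum_erase _ _ (Finset.mem_univ k)]
      exact hsum
    have herase_nn : 0 ≤ ∑ i ∈ Finset.univ.erase k, hH.eigenvalues i :=
      Finset.sum_nonneg fun i _ => hnn i
    have hothers : ∀ i, i ≠ k → hH.eigenvalues i = 0 := by
      intro i hi
      have hle : hH.eigenvalues i ≤ ∑ j ∈ Finset.univ.erase k, hH.eigenvalues j :=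
        Finset.single_le_sum (fun j _ => hnn j) (Finset.mem_erase.mpr ⟨hi, Finset.mem_univ i⟩)
      linarith [hnn i]
    have hkval : hH.eigenvalues k = 1 := by linarith
    refine ⟨⇑(hH.eigenvectorBasis k), eigBasis_unit hH k, ?_⟩
    set U : Matrix (Fin d) (Fin d) ℂ := (hH.eigenvectorUnitary : Matrix (Fin d) (Fin d) ℂ)
      with hU
    have hspec : ρ = U * Matrix.diagonal (RCLike.ofReal ∘ hH.eigenvalues) * star U := by
      have := hH.spectral_theorem; rwa [Unitary.conjStarAlgAut_apply] at this
    have hd : ∀ a : Fin d, ((RCLike.ofReal ∘ hH.eigenvalues) a : ℂ) = if a = k then 1 else 0 := by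
      intro a
      by_cases ha : a = k
      · simp [ha, hkval]
      · simp [ha, hothers a ha]
    ext i j
    calc ρ i j = ∑ a, U i a * ((RCLike.ofReal ∘ hH.eigenvalues) a * star U a j) := by
          conv_lhs => rw [hspec]
          rw [Matrix.mul_assoc, Matrix.mul_apply]
          refine Finset.sum_congr rfl fun a _ => ?_
          rw [Matrix.mul_apply]
          congr 1
          rw [Finset.sum_eq_single a]
          · rw [Matrix.diagonal_apply_eq]
          · intro b _ hb
            rw [Matrix.diagonal_apply_ne' _ hb, zero_mul]
          · intro hb
            exact absurd (Finset.mem_univ a) hb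
      _ = ∑ a, (if a = k then U i a * star U a j else 0) := by
          refine Finset.sum_congr rfl fun a _ => ?_
          rw [hd a]
          by_cases ha : a = k <;> simp [ha]
      _ = U i k * star U k j := by simp
      _ = Matrix.vecMulVec ⇑(hH.eigenvectorBasis k) (star ⇑(hH.eigenvectorBasis k)) i j := by
          rw [Matrix.vecMulVec_apply, hU]
          simp [Matrix.star_apply]

lemma rankOne_density {P : Matrix (Fin d) (Fin d) ℂ} (h : IsRankOneProj P) : IsDensity P := by
  obtain ⟨ψ, hψ, rfl⟩ := h
  exact ⟨psd_vmv ψ, by rw [trace_vmv, hψ]⟩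

lemma rankOne_ext {P : Matrix (Fin d) (Fin d) ℂ} (h : IsRankOneProj P) : ExtremeState P := by
  obtain ⟨ψ, hψ, rfl⟩ := h
  intro σ τ hσ hτ p hp0 hp1 heq
  have hσP : σ = Matrix.vecMulVec ψ (star ψ) := by
    refine eq_of_dominated hσ.1 hψ hp0 ?_ hσ.2
    have h2 : Matrix.vecMulVec ψ (star ψ) - (p:ℂ) • σ = ((1 - p : ℝ) : ℂ) • τ := by
      rw [heq, add_sub_cancel_left]
    rw [h2]
    exact psd_rsmul hτ.1 (by linarith)
  have hτP : τ = Matrix.vecMulVec ψ (star ψ) := by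
    refine eq_of_dominated hτ.1 hψ (by linarith : (0:ℝ) < 1 - p) ?_ hτ.2
    have h2 : Matrix.vecMulVec ψ (star ψ) - ((1 - p : ℝ) : ℂ) • τ = (p:ℂ) • σ := by
      rw [heq, add_sub_cancel_right]
    rw [h2]
    exact psd_rsmul hσ.1 (le_of_lt hp0)
  rw [hσP, hτP]

lemma density_convex {σ τ : Matrix (Fin d) (Fin d) ℂ} (hσ : IsDensity σ) (hτ : IsDensity τ)
    {p : ℝ} (hp0 : 0 ≤ p) (hp1 : p ≤ 1) :
    IsDensity ((p : ℂ) • σ + ((1 - p : ℝ) : ℂ) • τ) := by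
  constructor
  · exact (psd_rsmul hσ.1 hp0).add (psd_rsmul hτ.1 (by linarith))
  · rw [Matrix.trace_add, Matrix.trace_smul, Matrix.trace_smul, hσ.2, hτ.2, smul_eq_mul, smul_eq_mul]
    push_cast
    ring


end PureStateAux

/-- A state space symmetry maps rank-one projections (pure states) to rank-one
projections, and restricts to a bijection between the sets of rank-one projections. -/
theorem stateSymmetry_pure_to_pure (m n : ℕ)
    (S : Matrix (Fin m) (Fin m) ℂ → Matrix (Fin n) (Fin n) ℂ)
    (hS : IsStateSymmetry S) :
    (∀ P : Matrix (Fin m) (Fin m) ℂ, IsRankOneProj P → IsRankOneProj (S P)) ∧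
    Set.BijOn S {P | IsRankOneProj P} {P | IsRankOneProj P} := by
  obtain ⟨⟨hmap, hinj, hsurj⟩, hconv⟩ := hS
  have hfwd : ∀ P : Matrix (Fin m) (Fin m) ℂ, IsRankOneProj P → IsRankOneProj (S P) := by
    intro P hP
    have hPd : IsDensity P := rankOne_density hP
    have hSPd : IsDensity (S P) := hmap hPd
    refine ext_density_rankOne hSPd ?_
    intro σ τ hσ hτ p hp0 hp1 heq
    obtain ⟨σ', hσ', hσ'eq⟩ := hsurj (Set.mem_setOf.mpr hσ)
    obtain ⟨τ', hτ', hτ'eq⟩ := hsurj (Set.mem_setOf.mpr hτ)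
    have hcomb : IsDensity ((p : ℂ) • σ' + ((1 - p : ℝ) : ℂ) • τ') :=
      density_convex hσ' hτ' (le_of_lt hp0) (le_of_lt hp1)
    have hSeq : S ((p : ℂ) • σ' + ((1 - p : ℝ) : ℂ) • τ') = S P := by
      rw [hconv σ' τ' hσ' hτ' p (le_of_lt hp0) (le_of_lt hp1), hσ'eq, hτ'eq, ← heq]
    have hP' : (p : ℂ) • σ' + ((1 - p : ℝ) : ℂ) • τ' = P := hinj hcomb hPd hSeq
    have : σ' = τ' := rankOne_ext hP σ' τ' hσ' hτ' p hp0 hp1 hP'.symm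
    rw [← hσ'eq, ← hτ'eq, this]
  refine ⟨hfwd, fun P hP => hfwd P hP, fun A hA B hB hAB =>
    hinj (rankOne_density hA) (rankOne_density hB) hAB, ?_⟩
  intro Q hQ
  have hQ' : IsRankOneProj Q := hQ
  have hQd : IsDensity Q := rankOne_density hQ'
  obtain ⟨ρ, hρd, hρeq⟩ := hsurj (Set.mem_setOf.mpr hQd)
  have hρd' : IsDensity ρ := hρd
  refine ⟨ρ, ?_, hρeq⟩
  show IsRankOneProj ρ
  refine ext_density_rankOne hρd' ?_
  intro σ τ hσ hτ p hp0 hp1 heq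
  have hSeq : Q = (p : ℂ) • S σ + ((1 - p : ℝ) : ℂ) • S τ := by
    rw [← hρeq, heq, hconv σ τ hσ hτ p (le_of_lt hp0) (le_of_lt hp1)]
  have hSστ : S σ = S τ :=
    rankOne_ext hQ' (S σ) (S τ) (hmap hσ) (hmap hτ) p hp0 hp1 hSeq
  exact hinj hσ hτ hSστ
end
end

section
/- Let S be a state space symmetry from the density matrices on ℂ^m to the density matrices on ℂ^n. Then for all unit vectors ψ, φ ∈ ℂ^m: Tr[S(|ψ⟩⟨ψ|) · S(|φ⟩⟨φ|)] = |⟨ψ|φ⟩|². In other words, the induced transformation of rays preserves the ray product. -/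
open scoped ComplexOrder Kronecker
open Matrix

noncomputable section

/-! ### Auxiliary lemmas for `stateSymmetry_ray_product` -/

section RayProductAux

variable {d : ℕ}

private lemma rp_conj_mul_self_eq (x : ℂ) : starRingEnd ℂ x * x = ((‖x‖^2 : ℝ) : ℂ) := by
  rw [mul_comm, Complex.mul_conj, Complex.normSq_eq_norm_sq]

private lemma rp_star_dot_comm (a b : Fin d → ℂ) :
    star b ⬝ᵥ a = starRingEnd ℂ (star a ⬝ᵥ b) := by
  simp only [dotProduct, map_sum, Pi.star_apply, _root_.map_mul, Complex.conj_conj]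
  exact Finset.sum_congr rfl fun j _ => by simp [mul_comm]

private lemma rp_vecMulVec_mulVec (a b c : Fin d → ℂ) :
    Matrix.vecMulVec a b *ᵥ c = (b ⬝ᵥ c) • a := by
  ext i
  simp only [Matrix.mulVec, dotProduct, Matrix.vecMulVec_apply, Pi.smul_apply,
    smul_eq_mul, Finset.sum_mul, Finset.mul_sum]
  exact Finset.sum_congr rfl fun j _ => by ring

private lemma rp_proj_quad (a c : Fin d → ℂ) :
    star c ⬝ᵥ (Matrix.vecMulVec a (star a) *ᵥ c)
      = (starRingEnd ℂ (star a ⬝ᵥ c)) * (star a ⬝ᵥ c) := by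
  rw [rp_vecMulVec_mulVec, dotProduct_smul, ← rp_star_dot_comm]
  simp [mul_comm]

private lemma rp_proj_posSemidef (a : Fin d → ℂ) : (Matrix.vecMulVec a (star a)).PosSemidef := by
  refine Matrix.PosSemidef.of_dotProduct_mulVec_nonneg ?_ ?_
  · ext i j
    simp [Matrix.vecMulVec_apply, Matrix.conjTranspose_apply, mul_comm]
  · intro x
    rw [rp_proj_quad]
    exact star_mul_self_nonneg _

private lemma rp_trace_vecMulVec (a b : Fin d → ℂ) : (Matrix.vecMulVec a b).trace = b ⬝ᵥ a := by
  simp only [Matrix.trace, Matrix.diag, Matrix.vecMulVec_apply, dotProduct]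
  exact Finset.sum_congr rfl fun j _ => by ring

private lemma rp_proj_density {a : Fin d → ℂ} (ha : star a ⬝ᵥ a = 1) :
    IsDensity (Matrix.vecMulVec a (star a)) :=
  ⟨rp_proj_posSemidef a, by rw [rp_trace_vecMulVec, ha]⟩

private lemma rp_proj_mul_proj (a b : Fin d → ℂ) :
    Matrix.vecMulVec a (star a) * Matrix.vecMulVec b (star b)
      = (star a ⬝ᵥ b) • Matrix.vecMulVec a (star b) := by
  ext i j
  simp only [Matrix.mul_apply, Matrix.vecMulVec_apply, Matrix.smul_apply, dotProduct,
    Pi.star_apply, smul_eq_mul, Finset.sum_mul, Finset.mul_sum]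
  exact Finset.sum_congr rfl fun k _ => by ring

private lemma rp_trace_proj_mul (a b : Fin d → ℂ) :
    (Matrix.vecMulVec a (star a) * Matrix.vecMulVec b (star b)).trace
      = (star a ⬝ᵥ b) * starRingEnd ℂ (star a ⬝ᵥ b) := by
  rw [rp_proj_mul_proj, Matrix.trace_smul, rp_trace_vecMulVec, smul_eq_mul, rp_star_dot_comm a b]

private lemma rp_vecMulVec_add_left (v w u : Fin d → ℂ) :
    Matrix.vecMulVec (v + w) u = Matrix.vecMulVec v u + Matrix.vecMulVec w u := by
  ext i j; simp [Matrix.vecMulVec_apply]; ring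

private lemma rp_vecMulVec_add_right (v w u : Fin d → ℂ) :
    Matrix.vecMulVec u (v + w) = Matrix.vecMulVec u v + Matrix.vecMulVec u w := by
  ext i j; simp [Matrix.vecMulVec_apply]; ring

private lemma rp_vecMulVec_smul_left (α : ℂ) (v u : Fin d → ℂ) :
    Matrix.vecMulVec (α • v) u = α • Matrix.vecMulVec v u := by
  ext i j; simp [Matrix.vecMulVec_apply]; ring

private lemma rp_vecMulVec_smul_right (α : ℂ) (v u : Fin d → ℂ) :
    Matrix.vecMulVec u (α • v) = α • Matrix.vecMulVec u v := by
  ext i j; simp [Matrix.vecMulVec_apply]; ring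

private lemma rp_vecMulVec_sub_left (v w u : Fin d → ℂ) :
    Matrix.vecMulVec (v - w) u = Matrix.vecMulVec v u - Matrix.vecMulVec w u := by
  ext i j; simp [Matrix.vecMulVec_apply]; ring

private lemma rp_vecMulVec_sub_right (v w u : Fin d → ℂ) :
    Matrix.vecMulVec u (v - w) = Matrix.vecMulVec u v - Matrix.vecMulVec u w := by
  ext i j; simp [Matrix.vecMulVec_apply]; ring

private lemma rp_cs_dot (u c : Fin d → ℂ) :
    ‖star u ⬝ᵥ c‖ ≤ Real.sqrt (star u ⬝ᵥ u).re * Real.sqrt (star c ⬝ᵥ c).re := by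
  have h1 := norm_inner_le_norm (𝕜 := ℂ) (E := EuclideanSpace ℂ (Fin d))
    ((WithLp.equiv 2 (Fin d → ℂ)).symm u) ((WithLp.equiv 2 (Fin d → ℂ)).symm c)
  rw [norm_eq_sqrt_re_inner (𝕜 := ℂ) ((WithLp.equiv 2 (Fin d → ℂ)).symm u),
      norm_eq_sqrt_re_inner (𝕜 := ℂ) ((WithLp.equiv 2 (Fin d → ℂ)).symm c)] at h1
  simp only [EuclideanSpace.inner_eq_star_dotProduct] at h1
  rw [dotProduct_comm (star u) c, dotProduct_comm (star u) u, dotProduct_comm (star c) c]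
  simpa using h1

private lemma rp_norm_dot_le_one {a c : Fin d → ℂ} (ha : star a ⬝ᵥ a = 1)
    (hc : star c ⬝ᵥ c = 1) : ‖star a ⬝ᵥ c‖ ≤ 1 := by
  have := rp_cs_dot a c
  rw [ha, hc] at this
  simpa using this

/-- Cauchy–Schwarz equality: if `|⟨ψ,φ⟩| = 1` for unit vectors then the projections agree. -/
private lemma rp_proj_eq_of_norm_dot_eq_one {ψ φ : Fin d → ℂ} (hψ : star ψ ⬝ᵥ ψ = 1)
    (hφ : star φ ⬝ᵥ φ = 1) (h : ‖star ψ ⬝ᵥ φ‖ = 1) :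
    Matrix.vecMulVec φ (star φ) = Matrix.vecMulVec ψ (star ψ) := by
  set z := star ψ ⬝ᵥ φ with hz
  have hw : φ - z • ψ = 0 := by
    apply dotProduct_star_self_eq_zero.mp
    have hstar : star (φ - z • ψ) = star φ - starRingEnd ℂ z • star ψ := by
      ext i; simp [Complex.star_def]
    have h1 : star φ ⬝ᵥ ψ = starRingEnd ℂ z := by rw [hz]; exact rp_star_dot_comm ψ φ
    have h2 : starRingEnd ℂ z * z = 1 := by
      rw [rp_conj_mul_self_eq, h]; norm_num
    rw [hstar]
    simp only [sub_dotProduct, dotProduct_sub, smul_dotProduct, dotProduct_smul,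
      smul_eq_mul, hφ, hψ, mul_one, h1, ← hz]
    linear_combination -h2
  have hφz : φ = z • ψ := by
    have := sub_eq_zero.mp hw
    exact this
  rw [hφz]
  rw [show star (z • ψ) = starRingEnd ℂ z • star ψ from by ext i; simp [Complex.star_def]]
  rw [rp_vecMulVec_smul_left, rp_vecMulVec_smul_right, smul_smul, mul_comm,
    show starRingEnd ℂ z * z = 1 from by rw [rp_conj_mul_self_eq, h]; norm_num, one_smul]

private lemma rp_key_bound {a b c : Fin d → ℂ} (ha : star a ⬝ᵥ a = 1) (hb : star b ⬝ᵥ b = 1)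
    (hc : star c ⬝ᵥ c = 1) :
    ‖star a ⬝ᵥ c‖^2 + ‖star b ⬝ᵥ c‖^2 ≤ 1 + ‖star a ⬝ᵥ b‖ := by
  set x := star a ⬝ᵥ c with hx
  set y := star b ⬝ᵥ c with hy
  set z := star a ⬝ᵥ b with hz
  set T : ℝ := ‖x‖^2 + ‖y‖^2 with hT
  have hT0 : 0 ≤ T := by positivity
  set u : Fin d → ℂ := x • a + y • b with hu
  have hdot : star u ⬝ᵥ c = (T : ℂ) := by
    simp only [hu, star_add, star_smul, add_dotProduct, smul_dotProduct, ← hx, ← hy,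
      Complex.star_def]
    rw [smul_eq_mul, smul_eq_mul, rp_conj_mul_self_eq, rp_conj_mul_self_eq]
    norm_cast
  have huu : (star u ⬝ᵥ u).re ≤ T * (1 + ‖z‖) := by
    have hba : star b ⬝ᵥ a = starRingEnd ℂ z := by rw [hz]; exact rp_star_dot_comm a b
    have hexp : star u ⬝ᵥ u
        = (T : ℂ) + (starRingEnd ℂ x * y * z + starRingEnd ℂ (starRingEnd ℂ x * y * z)) := by
      simp only [hu, star_add, star_smul, add_dotProduct, smul_dotProduct, dotProduct_add,
        dotProduct_smul, ha, hb, ← hz, hba, Complex.star_def, smul_eq_mul, mul_one,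
        _root_.map_mul, Complex.conj_conj]
      rw [show ((T:ℂ)) = starRingEnd ℂ x * x + starRingEnd ℂ y * y from by
        rw [rp_conj_mul_self_eq, rp_conj_mul_self_eq]; norm_cast]
      ring
    rw [hexp]
    have hre : ((T : ℂ) + (starRingEnd ℂ x * y * z + starRingEnd ℂ (starRingEnd ℂ x * y * z))).re
        = T + 2 * (starRingEnd ℂ x * y * z).re := by
      simp [Complex.add_re, Complex.conj_re]; ring
    rw [hre]
    have h1 : (starRingEnd ℂ x * y * z).re ≤ ‖x‖ * ‖y‖ * ‖z‖ := by
      calc (starRingEnd ℂ x * y * z).re ≤ ‖starRingEnd ℂ x * y * z‖ := Complex.re_le_norm _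
        _ = ‖x‖ * ‖y‖ * ‖z‖ := by simp [norm_mul]
    have h2 : 2 * (‖x‖ * ‖y‖) ≤ T := by nlinarith [sq_nonneg (‖x‖ - ‖y‖)]
    nlinarith [norm_nonneg z, h1, h2]
  have hcs := rp_cs_dot u c
  rw [hdot, hc] at hcs
  simp only [Complex.one_re, Real.sqrt_one, mul_one] at hcs
  have hTnorm : ‖(T : ℂ)‖ = T := by rw [Complex.norm_real, Real.norm_of_nonneg hT0]
  rw [hTnorm] at hcs
  have hz0 : (0:ℝ) ≤ 1 + ‖z‖ := by positivity
  have hsq : T ^ 2 ≤ T * (1 + ‖z‖) := by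
    have h3 : Real.sqrt (star u ⬝ᵥ u).re ≤ Real.sqrt (T * (1 + ‖z‖)) := Real.sqrt_le_sqrt huu
    have h4 : T ≤ Real.sqrt (T * (1 + ‖z‖)) := le_trans hcs h3
    calc T ^ 2 ≤ Real.sqrt (T * (1 + ‖z‖)) ^ 2 := by apply pow_le_pow_left₀ hT0 h4
      _ = T * (1 + ‖z‖) := Real.sq_sqrt (by positivity)
  rcases eq_or_lt_of_le hT0 with h | h
  · nlinarith [norm_nonneg z]
  · nlinarith

end RayProductAux
section RayProductAux2
variable {d : ℕ}

private lemma rp_midpoint_decomp {ψ φ : Fin d → ℂ} (hψ : star ψ ⬝ᵥ ψ = 1) (hφ : star φ ⬝ᵥ φ = 1)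
    (hs : ‖star ψ ⬝ᵥ φ‖ < 1) :
    ∃ c e : Fin d → ℂ, star c ⬝ᵥ c = 1 ∧ star e ⬝ᵥ e = 1 ∧
      (((1:ℝ)/2 : ℝ) : ℂ) • Matrix.vecMulVec ψ (star ψ) + ((1 - (1:ℝ)/2 : ℝ) : ℂ) • Matrix.vecMulVec φ (star φ)
        = (((1 + ‖star ψ ⬝ᵥ φ‖)/2 : ℝ) : ℂ) • Matrix.vecMulVec c (star c)
          + ((1 - (1 + ‖star ψ ⬝ᵥ φ‖)/2 : ℝ) : ℂ) • Matrix.vecMulVec e (star e) := by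
  set z := star ψ ⬝ᵥ φ with hz
  set s := ‖z‖ with hsdef
  have hs0 : (0:ℝ) ≤ s := norm_nonneg z
  have h2p : (0:ℝ) < 2 + 2*s := by linarith
  have h2m : (0:ℝ) < 2 - 2*s := by linarith
  -- phase
  set eph : ℂ := if z = 0 then 1 else starRingEnd ℂ z / (s : ℂ) with heph
  have heph1 : starRingEnd ℂ eph * eph = 1 := by
    rw [rp_conj_mul_self_eq]
    by_cases h : z = 0
    · simp [heph, h]
    · have : ‖eph‖ = 1 := by
        rw [heph, if_neg h, norm_div]
        simp only [RCLike.norm_conj, Complex.norm_real]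
        rw [Real.norm_of_nonneg hs0, ← hsdef, div_self (by simpa [hsdef] using norm_ne_zero_iff.mpr h)]
      rw [this]; norm_num
  have hez : eph * z = (s : ℂ) := by
    by_cases h : z = 0
    · simp [heph, h, hsdef]
    · have hsne : (s:ℂ) ≠ 0 := by
        exact_mod_cast ne_of_gt (by simpa [hsdef] using norm_pos_iff.mpr h)
      rw [heph, if_neg h, div_mul_eq_mul_div, mul_comm, Complex.mul_conj, Complex.normSq_eq_norm_sq,
        ← hsdef, div_eq_iff hsne]
      push_cast; ring
  set b' : Fin d → ℂ := eph • φ with hb'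
  have hstarb' : star b' = starRingEnd ℂ eph • star φ := by
    ext i; simp [hb', Complex.star_def]
  have A1 : star ψ ⬝ᵥ b' = (s : ℂ) := by
    rw [hb', dotProduct_smul, smul_eq_mul, ← hz, hez]
  have A2 : star b' ⬝ᵥ ψ = (s : ℂ) := by
    rw [rp_star_dot_comm ψ b', A1]
    simp [Complex.conj_ofReal]
  have A3 : star b' ⬝ᵥ b' = 1 := by
    rw [hstarb', hb', smul_dotProduct, dotProduct_smul, hφ]
    simpa using heph1
  have A4 : Matrix.vecMulVec b' (star b') = Matrix.vecMulVec φ (star φ) := by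
    rw [hb', hstarb', rp_vecMulVec_smul_left, rp_vecMulVec_smul_right, smul_smul, mul_comm, heph1, one_smul]
  -- the two vectors
  set rc : ℂ := Complex.ofReal ((Real.sqrt (2 + 2*s))⁻¹) with hrc
  set rd : ℂ := Complex.ofReal ((Real.sqrt (2 - 2*s))⁻¹) with hrd
  have hrcc : starRingEnd ℂ rc = rc := by rw [hrc]; exact Complex.conj_ofReal _
  have hrdc : starRingEnd ℂ rd = rd := by rw [hrd]; exact Complex.conj_ofReal _
  have hsqp := Real.mul_self_sqrt h2p.le
  have hsqm := Real.mul_self_sqrt h2m.le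
  have hnep : Real.sqrt (2 + 2*s) ≠ 0 := by positivity
  have hnem : Real.sqrt (2 - 2*s) ≠ 0 := by
    intro h0
    rw [h0] at hsqm; nlinarith
  have hrc2 : rc * rc = Complex.ofReal ((2 + 2*s)⁻¹) := by
    rw [hrc, ← Complex.ofReal_mul, ← mul_inv, hsqp]
  have hrd2 : rd * rd = Complex.ofReal ((2 - 2*s)⁻¹) := by
    rw [hrd, ← Complex.ofReal_mul, ← mul_inv, hsqm]
  refine ⟨rc • (ψ + b'), rd • (ψ - b'), ?_, ?_, ?_⟩
  · rw [show star (rc • (ψ + b')) = starRingEnd ℂ rc • star (ψ + b') from by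
      ext i; simp [Complex.star_def, mul_add, mul_sub]]
    rw [hrcc, smul_dotProduct, dotProduct_smul, star_add, add_dotProduct, dotProduct_add,
      dotProduct_add, hψ, A1, A2, A3, smul_eq_mul, smul_eq_mul, hrc]
    have hr : ((Real.sqrt (2+2*s))⁻¹ * ((Real.sqrt (2+2*s))⁻¹ * (1 + s + (s + 1))) : ℝ) = 1 := by
      field_simp
      nlinarith [hsqp, Real.sq_sqrt (show (0:ℝ) ≤ 2*(1+s) by linarith)]
    exact_mod_cast congrArg Complex.ofReal hr
  · rw [show star (rd • (ψ - b')) = starRingEnd ℂ rd • star (ψ - b') from by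
      ext i; simp [Complex.star_def, mul_add, mul_sub]]
    rw [hrdc, smul_dotProduct, dotProduct_smul, star_sub, sub_dotProduct, dotProduct_sub,
      dotProduct_sub, hψ, A1, A2, A3, smul_eq_mul, smul_eq_mul, hrd]
    have hr : ((Real.sqrt (2-2*s))⁻¹ * ((Real.sqrt (2-2*s))⁻¹ * ((1 - s) - (s - 1))) : ℝ) = 1 := by
      field_simp
      rw [Real.sq_sqrt (by linarith), div_eq_one_iff_eq (by linarith)]; ring
    exact_mod_cast congrArg Complex.ofReal hr
  · -- matrix identity
    have hPc : Matrix.vecMulVec (rc • (ψ + b')) (star (rc • (ψ + b')))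
        = (rc * rc) • Matrix.vecMulVec (ψ + b') (star (ψ + b')) := by
      rw [show star (rc • (ψ + b')) = starRingEnd ℂ rc • star (ψ + b') from by
        ext i; simp [Complex.star_def, mul_add, mul_sub]]
      rw [hrcc, rp_vecMulVec_smul_left, rp_vecMulVec_smul_right, smul_smul]
    have hPd : Matrix.vecMulVec (rd • (ψ - b')) (star (rd • (ψ - b')))
        = (rd * rd) • Matrix.vecMulVec (ψ - b') (star (ψ - b')) := by
      rw [show star (rd • (ψ - b')) = starRingEnd ℂ rd • star (ψ - b') from by
        ext i; simp [Complex.star_def, mul_add, mul_sub]]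
      rw [hrdc, rp_vecMulVec_smul_left, rp_vecMulVec_smul_right, smul_smul]
    rw [hPc, hPd, smul_smul, smul_smul, hrc2, hrd2]
    have c1 : (((1 + s)/2 : ℝ) : ℂ) * Complex.ofReal ((2 + 2*s)⁻¹) = ((1/4 : ℝ) : ℂ) := by
      rw [← Complex.ofReal_mul]
      congr 1
      field_simp; ring
    have c2 : ((1 - (1 + s)/2 : ℝ) : ℂ) * Complex.ofReal ((2 - 2*s)⁻¹) = ((1/4 : ℝ) : ℂ) := by
      rw [← Complex.ofReal_mul]
      congr 1
      have hs1 : (1:ℝ) - s ≠ 0 := by linarith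
      field_simp; ring
    rw [c1, c2]
    have expand : Matrix.vecMulVec (ψ + b') (star (ψ + b')) + Matrix.vecMulVec (ψ - b') (star (ψ - b'))
        = (2:ℂ) • (Matrix.vecMulVec ψ (star ψ) + Matrix.vecMulVec φ (star φ)) := by
      rw [star_add, star_sub, rp_vecMulVec_add_left, rp_vecMulVec_sub_left, rp_vecMulVec_add_right,
        rp_vecMulVec_add_right, rp_vecMulVec_sub_right, rp_vecMulVec_sub_right, ← A4]
      module
    rw [← smul_add, expand, smul_smul]
    norm_num


end RayProductAux2
section RayProductAux3
variable {d : ℕ}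

private lemma rp_smul_psd {t : ℝ} (ht : 0 ≤ t) {M : Matrix (Fin d) (Fin d) ℂ}
    (hM : M.PosSemidef) : ((t : ℂ) • M).PosSemidef := by
  refine Matrix.PosSemidef.of_dotProduct_mulVec_nonneg ?_ ?_
  · show ((t : ℂ) • M)ᴴ = (t : ℂ) • M
    rw [Matrix.conjTranspose_smul, hM.1.eq]
    congr 1
    simp [Complex.star_def, Complex.conj_ofReal]
  · intro x
    rw [Matrix.smul_mulVec, dotProduct_smul, smul_eq_mul]
    have hq := hM.dotProduct_mulVec_nonneg x
    rw [Complex.nonneg_iff] at hq ⊢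
    refine ⟨?_, ?_⟩
    · simp only [Complex.mul_re, Complex.ofReal_re, Complex.ofReal_im, zero_mul, sub_zero]
      exact mul_nonneg ht hq.1
    · simp only [Complex.mul_im, Complex.ofReal_re, Complex.ofReal_im, zero_mul, add_zero]
      have h2 : (star x ⬝ᵥ M *ᵥ x).im = 0 := hq.2.symm
      rw [h2, mul_zero]

private lemma rp_density_convex {ρ σ : Matrix (Fin d) (Fin d) ℂ} (hρ : IsDensity ρ)
    (hσ : IsDensity σ) {p : ℝ} (h0 : 0 ≤ p) (h1 : p ≤ 1) :
    IsDensity ((p : ℂ) • ρ + ((1 - p : ℝ) : ℂ) • σ) := by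
  constructor
  · exact (rp_smul_psd h0 hρ.1).add (rp_smul_psd (by linarith) hσ.1)
  · rw [Matrix.trace_add, Matrix.trace_smul, Matrix.trace_smul, hρ.2, hσ.2]
    push_cast; simp

private lemma rp_herm_dot {M : Matrix (Fin d) (Fin d) ℂ} (hM : M.IsHermitian)
    (x y : Fin d → ℂ) :
    star x ⬝ᵥ (M *ᵥ y) = starRingEnd ℂ (star y ⬝ᵥ (M *ᵥ x)) := by
  rw [← rp_star_dot_comm y (M *ᵥ x), Matrix.star_mulVec, hM.eq, ← Matrix.dotProduct_mulVec]

/-- A rank-one projection is an extreme point of the density matrices. -/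
private lemma rp_proj_extreme {a : Fin d → ℂ} (ha : star a ⬝ᵥ a = 1)
    {ρ σ : Matrix (Fin d) (Fin d) ℂ} (hρ : IsDensity ρ) (hσ : IsDensity σ)
    (h : Matrix.vecMulVec a (star a) = (1/2 : ℂ) • ρ + (1/2 : ℂ) • σ) :
    ρ = Matrix.vecMulVec a (star a) := by
  have key : ∀ x : Fin d → ℂ, star a ⬝ᵥ x = 0 → ρ *ᵥ x = 0 := by
    intro x hx
    have h0 : star x ⬝ᵥ (Matrix.vecMulVec a (star a) *ᵥ x) = 0 := by
      rw [rp_proj_quad, hx, mul_zero]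
    have hexp : star x ⬝ᵥ (Matrix.vecMulVec a (star a) *ᵥ x)
        = (1/2 : ℂ) * (star x ⬝ᵥ (ρ *ᵥ x)) + (1/2 : ℂ) * (star x ⬝ᵥ (σ *ᵥ x)) := by
      rw [h, Matrix.add_mulVec, Matrix.smul_mulVec, Matrix.smul_mulVec,
        dotProduct_add, dotProduct_smul, dotProduct_smul, smul_eq_mul, smul_eq_mul]
    have hsum : star x ⬝ᵥ (ρ *ᵥ x) + star x ⬝ᵥ (σ *ᵥ x) = 0 := by
      linear_combination 2 * h0 - 2 * hexp
    have hq1 := hρ.1.dotProduct_mulVec_nonneg x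
    have hq2 := hσ.1.dotProduct_mulVec_nonneg x
    have hz : star x ⬝ᵥ (ρ *ᵥ x) = 0 := by
      have hle : star x ⬝ᵥ (ρ *ᵥ x) ≤ 0 := by
        have := eq_neg_of_add_eq_zero_left hsum
        rw [this]
        exact neg_nonpos.mpr hq2
      exact le_antisymm hle hq1
    exact (hρ.1.dotProduct_mulVec_zero_iff x).mp hz
  have decomp : ∀ v : Fin d → ℂ, ρ *ᵥ v = (star a ⬝ᵥ v) • (ρ *ᵥ a) := by
    intro v
    have hw : star a ⬝ᵥ (v - (star a ⬝ᵥ v) • a) = 0 := by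
      rw [dotProduct_sub, dotProduct_smul, ha, smul_eq_mul, mul_one, sub_self]
    have hv : v = (star a ⬝ᵥ v) • a + (v - (star a ⬝ᵥ v) • a) := by module
    calc ρ *ᵥ v = ρ *ᵥ ((star a ⬝ᵥ v) • a + (v - (star a ⬝ᵥ v) • a)) := by rw [← hv]
      _ = (star a ⬝ᵥ v) • (ρ *ᵥ a) + ρ *ᵥ (v - (star a ⬝ᵥ v) • a) := by
          rw [Matrix.mulVec_add, Matrix.mulVec_smul]
      _ = (star a ⬝ᵥ v) • (ρ *ᵥ a) := by rw [key _ hw, add_zero]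
  -- ρ *ᵥ a is proportional to a
  set u : Fin d → ℂ := ρ *ᵥ a with hudef
  set c0 : ℂ := star a ⬝ᵥ u with hc0
  have hwu : star a ⬝ᵥ (u - c0 • a) = 0 := by
    rw [dotProduct_sub, dotProduct_smul, ha, smul_eq_mul, mul_one, hc0, sub_self]
  have hρwu : ρ *ᵥ (u - c0 • a) = 0 := key _ hwu
  have h1 : star (u - c0 • a) ⬝ᵥ u = 0 := by
    rw [hudef, rp_herm_dot hρ.1.1, ← hudef, hρwu, dotProduct_zero, map_zero]
  have h2 : star (u - c0 • a) ⬝ᵥ (u - c0 • a) = 0 := by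
    have hsplit : star (u - c0 • a) ⬝ᵥ (u - c0 • a)
        = star (u - c0 • a) ⬝ᵥ u - c0 * (star (u - c0 • a) ⬝ᵥ a) := by
      rw [dotProduct_sub, dotProduct_smul, smul_eq_mul]
    have h3 : star (u - c0 • a) ⬝ᵥ a = 0 := by
      rw [rp_star_dot_comm a (u - c0 • a), hwu, map_zero]
    rw [hsplit, h1, h3, mul_zero, sub_zero]
  have hwu0 : u - c0 • a = 0 := dotProduct_star_self_eq_zero.mp h2
  have hua : u = c0 • a := by
    have := sub_eq_zero.mp hwu0; exact this
  -- now ρ = c0 • |a⟩⟨a|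
  have hmat : ρ = c0 • Matrix.vecMulVec a (star a) := by
    ext i j
    have hd := congrFun (decomp (Pi.single j 1)) i
    rw [Matrix.mulVec_single] at hd
    simp only [MulOpposite.op_one, one_smul, Matrix.col_apply] at hd
    rw [hua] at hd
    rw [dotProduct_single] at hd
    simp only [Pi.smul_apply, smul_eq_mul, Pi.star_apply, mul_one] at hd
    rw [hd]
    simp only [Matrix.smul_apply, Matrix.vecMulVec_apply, Pi.star_apply, smul_eq_mul]
    ring
  have htr : c0 = 1 := by
    have := hρ.2
    rw [hmat, Matrix.trace_smul, rp_trace_vecMulVec, ha, smul_eq_mul, mul_one] at this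
    exact this
  rw [hmat, htr, one_smul]

/-- An extreme density matrix is a rank-one projection. -/
private lemma rp_extreme_classify {ρ : Matrix (Fin d) (Fin d) ℂ} (hρ : IsDensity ρ)
    (hext : ∀ ρ₁ ρ₂ : Matrix (Fin d) (Fin d) ℂ, IsDensity ρ₁ → IsDensity ρ₂ →
      ρ = (1/2 : ℂ) • ρ₁ + (1/2 : ℂ) • ρ₂ → ρ₁ = ρ₂) :
    ∃ a : Fin d → ℂ, star a ⬝ᵥ a = 1 ∧ ρ = Matrix.vecMulVec a (star a) := by
  classical
  have hH : ρ.IsHermitian := hρ.1.1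
  set Um : Matrix (Fin d) (Fin d) ℂ := (hH.eigenvectorUnitary : Matrix (Fin d) (Fin d) ℂ)
    with hUm
  have hUU : star Um * Um = 1 := by
    have := hH.eigenvectorUnitary.2
    rw [Matrix.mem_unitaryGroup_iff'] at this
    exact this
  set ev : Fin d → ℝ := hH.eigenvalues with hev
  have hev0 : ∀ i, 0 ≤ ev i := fun i => hρ.1.eigenvalues_nonneg i
  have hspec : ρ = Um * Matrix.diagonal (fun i => ((ev i : ℝ) : ℂ)) * star Um := by
    have h := hH.spectral_theorem
    rw [Unitary.conjStarAlgAut_apply] at h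
    exact h
  have key1 : ∀ D : Matrix (Fin d) (Fin d) ℂ, star Um * (Um * D * star Um) * Um = D := by
    intro D
    simp only [← Matrix.mul_assoc]
    rw [hUU, Matrix.one_mul, Matrix.mul_assoc, hUU, Matrix.mul_one]
  have htraceconj : ∀ f : Fin d → ℂ,
      (Um * Matrix.diagonal f * star Um).trace = ∑ i, f i := by
    intro f
    rw [Matrix.trace_mul_cycle, hUU, Matrix.one_mul, Matrix.trace_diagonal]
  have hsum : ∑ i, ev i = 1 := by
    have h := hρ.2
    rw [hspec, htraceconj] at h
    exact_mod_cast h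
  -- at most one nonzero eigenvalue
  have hclaim : ∀ i j, i ≠ j → ev i = 0 ∨ ev j = 0 := by
    intro i j hij
    by_contra hc
    push_neg at hc
    have hi : 0 < ev i := lt_of_le_of_ne (hev0 i) (Ne.symm hc.1)
    have hj : 0 < ev j := lt_of_le_of_ne (hev0 j) (Ne.symm hc.2)
    set ε : ℝ := min (ev i) (ev j) with hεdef
    have hε0 : 0 < ε := lt_min hi hj
    set δ : Fin d → ℝ := Pi.single i ε + Pi.single j (-ε) with hδ
    have hδi : δ i = ε := by simp [hδ, Pi.single_apply, hij, hij.symm]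
    have hδj : δ j = -ε := by simp [hδ, Pi.single_apply, hij, hij.symm]
    have hδo : ∀ k, k ≠ i → k ≠ j → δ k = 0 := by
      intro k hki hkj; simp [hδ, Pi.single_apply, hki, hkj]
    have hsumδ : ∑ k, δ k = 0 := by
      rw [hδ]
      simp only [Pi.add_apply]
      rw [Finset.sum_add_distrib, Finset.sum_pi_single', Finset.sum_pi_single']
      simp
    have hnn1 : ∀ k, 0 ≤ ev k + δ k := by
      intro k
      rcases eq_or_ne k i with rfl | hki
      · rw [hδi]; linarith [hev0 k, hε0.le]
      rcases eq_or_ne k j with rfl | hkj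
      · rw [hδj]; have : ε ≤ ev k := min_le_right _ _; linarith
      · rw [hδo k hki hkj]; simpa using hev0 k
    have hnn2 : ∀ k, 0 ≤ ev k - δ k := by
      intro k
      rcases eq_or_ne k i with rfl | hki
      · rw [hδi]; have : ε ≤ ev k := min_le_left _ _; linarith
      rcases eq_or_ne k j with rfl | hkj
      · rw [hδj]; linarith [hev0 k, hε0.le]
      · rw [hδo k hki hkj]; simpa using hev0 k
    have hpsd1 : (Matrix.diagonal (fun k => ((ev k + δ k : ℝ) : ℂ))).PosSemidef := by
      refine Matrix.PosSemidef.diagonal ?_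
      intro k
      simp only [Pi.zero_apply]
      rw [Complex.nonneg_iff]
      constructor
      · simpa using hnn1 k
      · simp
    have hpsd2 : (Matrix.diagonal (fun k => ((ev k - δ k : ℝ) : ℂ))).PosSemidef := by
      refine Matrix.PosSemidef.diagonal ?_
      intro k
      simp only [Pi.zero_apply]
      rw [Complex.nonneg_iff]
      constructor
      · simpa using hnn2 k
      · simp
    have hd1 : IsDensity (Um * Matrix.diagonal (fun k => ((ev k + δ k : ℝ) : ℂ)) * star Um) := by
      constructor
      · have h := hpsd1.mul_mul_conjTranspose_same Um
        rwa [← Matrix.star_eq_conjTranspose] at h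
      · rw [htraceconj]
        have h : ∑ k, (ev k + δ k) = 1 := by
          rw [Finset.sum_add_distrib, hsum, hsumδ]; ring
        exact_mod_cast h
    have hd2 : IsDensity (Um * Matrix.diagonal (fun k => ((ev k - δ k : ℝ) : ℂ)) * star Um) := by
      constructor
      · have h := hpsd2.mul_mul_conjTranspose_same Um
        rwa [← Matrix.star_eq_conjTranspose] at h
      · rw [htraceconj]
        have h : ∑ k, (ev k - δ k) = 1 := by
          rw [Finset.sum_sub_distrib, hsum, hsumδ]; ring
        exact_mod_cast h
    have hD : (1/2 : ℂ) • Matrix.diagonal (fun k => ((ev k + δ k : ℝ) : ℂ))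
        + (1/2 : ℂ) • Matrix.diagonal (fun k => ((ev k - δ k : ℝ) : ℂ))
        = Matrix.diagonal (fun i => ((ev i : ℝ) : ℂ)) := by
      ext k l
      by_cases hkl : k = l
      · subst hkl
        simp only [Matrix.add_apply, Matrix.smul_apply, Matrix.diagonal_apply_eq, smul_eq_mul]
        push_cast; ring
      · simp [Matrix.diagonal_apply_ne _ hkl]
    have hmid : ρ = (1/2 : ℂ) • (Um * Matrix.diagonal (fun k => ((ev k + δ k : ℝ) : ℂ)) * star Um)
        + (1/2 : ℂ) • (Um * Matrix.diagonal (fun k => ((ev k - δ k : ℝ) : ℂ)) * star Um) := by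
      rw [hspec, ← hD, Matrix.mul_add, Matrix.mul_smul, Matrix.mul_smul, Matrix.add_mul,
        Matrix.smul_mul, Matrix.smul_mul]
    have heq := hext _ _ hd1 hd2 hmid
    have hDeq : Matrix.diagonal (fun k => ((ev k + δ k : ℝ) : ℂ))
        = Matrix.diagonal (fun k => ((ev k - δ k : ℝ) : ℂ)) := by
      rw [← key1 (Matrix.diagonal (fun k => ((ev k + δ k : ℝ) : ℂ))),
        ← key1 (Matrix.diagonal (fun k => ((ev k - δ k : ℝ) : ℂ))), heq]
    have hii := congrFun (congrFun hDeq i) i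
    simp only [Matrix.diagonal_apply_eq, hδi] at hii
    have : ev i + ε = ev i - ε := by exact_mod_cast hii
    linarith
  -- exactly one eigenvalue equals 1
  have hex : ∃ k, ev k ≠ 0 := by
    by_contra hall
    push_neg at hall
    rw [Finset.sum_eq_zero (fun k _ => hall k)] at hsum
    exact one_ne_zero hsum.symm
  obtain ⟨k, hk⟩ := hex
  have hzero : ∀ j, j ≠ k → ev j = 0 := fun j hj => (hclaim j k hj).resolve_right hk
  have hone : ev k = 1 := by
    rw [← hsum, Finset.sum_eq_single k (fun j _ hj => hzero j hj) (by simp)]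
  have hevif : ∀ q, ((ev q : ℝ) : ℂ) = if q = k then 1 else 0 := by
    intro q
    by_cases hq : q = k
    · subst hq; rw [hone]; simp
    · rw [hzero q hq]; simp [hq]
  refine ⟨fun i => Um i k, ?_, ?_⟩
  · have h1 : (star Um * Um) k k = (1 : Matrix (Fin d) (Fin d) ℂ) k k := by rw [hUU]
    rw [Matrix.mul_apply, Matrix.one_apply_eq] at h1
    simp only [Matrix.star_apply] at h1
    simpa [dotProduct] using h1
  · rw [hspec]
    ext i' j'
    rw [Matrix.mul_apply]
    simp only [Matrix.mul_diagonal, Matrix.star_apply, hevif, Matrix.vecMulVec_apply,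
      Pi.star_apply, mul_ite, ite_mul, mul_one, mul_zero, zero_mul, one_mul]
    rw [Finset.sum_ite_eq' Finset.univ k (fun q => Um i' q * star (Um j' q))]
    simp

end RayProductAux3
section RayProductAux4

private lemma rp_pure_transfer {m n : ℕ}
    {S : Matrix (Fin m) (Fin m) ℂ → Matrix (Fin n) (Fin n) ℂ}
    (hS : IsStateSymmetry S) {a : Fin m → ℂ} (ha : star a ⬝ᵥ a = 1) :
    ∃ b : Fin n → ℂ, star b ⬝ᵥ b = 1 ∧
      S (Matrix.vecMulVec a (star a)) = Matrix.vecMulVec b (star b) := by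
  have hdA : IsDensity (Matrix.vecMulVec a (star a)) := rp_proj_density ha
  have hSd : IsDensity (S (Matrix.vecMulVec a (star a))) := hS.1.mapsTo hdA
  have hc1 : (((1:ℝ)/2 : ℝ) : ℂ) = (1/2 : ℂ) := by norm_num
  have hc2 : ((1 - (1:ℝ)/2 : ℝ) : ℂ) = (1/2 : ℂ) := by norm_num
  refine rp_extreme_classify hSd ?_
  intro ρ₁ ρ₂ hd1 hd2 hmix
  obtain ⟨τ₁, hτ₁mem, hτ₁⟩ := hS.1.surjOn hd1
  obtain ⟨τ₂, hτ₂mem, hτ₂⟩ := hS.1.surjOn hd2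
  have hτ₁d : IsDensity τ₁ := hτ₁mem
  have hτ₂d : IsDensity τ₂ := hτ₂mem
  have haff := hS.2 τ₁ τ₂ hτ₁mem hτ₂mem (1/2) (by norm_num) (by norm_num)
  rw [hτ₁, hτ₂, hc1, hc2] at haff
  have hmixd : IsDensity ((1/2 : ℂ) • τ₁ + (1/2 : ℂ) • τ₂) := by
    have h := rp_density_convex hτ₁d hτ₂d (p := 1/2) (by norm_num) (by norm_num)
    rwa [hc1, hc2] at h
  have hPeq : Matrix.vecMulVec a (star a) = (1/2 : ℂ) • τ₁ + (1/2 : ℂ) • τ₂ := by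
    apply hS.1.injOn hdA hmixd
    rw [haff, ← hmix]
  have ht1 : τ₁ = Matrix.vecMulVec a (star a) := rp_proj_extreme ha hτ₁d hτ₂d hPeq
  have ht2 : τ₂ = Matrix.vecMulVec a (star a) := by
    refine rp_proj_extreme ha hτ₂d hτ₁d ?_
    rw [hPeq, add_comm]
  rw [← hτ₁, ← hτ₂, ht1, ht2]

private lemma rp_sym_mono {m n : ℕ}
    {S : Matrix (Fin m) (Fin m) ℂ → Matrix (Fin n) (Fin n) ℂ}
    (hS : IsStateSymmetry S) {ψ φ : Fin m → ℂ} {a b : Fin n → ℂ}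
    (hψ : star ψ ⬝ᵥ ψ = 1) (hφ : star φ ⬝ᵥ φ = 1)
    (ha : star a ⬝ᵥ a = 1) (hb : star b ⬝ᵥ b = 1)
    (hA : S (Matrix.vecMulVec ψ (star ψ)) = Matrix.vecMulVec a (star a))
    (hB : S (Matrix.vecMulVec φ (star φ)) = Matrix.vecMulVec b (star b)) :
    ‖star ψ ⬝ᵥ φ‖ ≤ ‖star a ⬝ᵥ b‖ := by
  have hle := rp_norm_dot_le_one hψ hφ
  rcases lt_or_eq_of_le hle with hlt | heq1
  · obtain ⟨c, e, hc, he, hdecomp⟩ := rp_midpoint_decomp hψ hφ hlt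
    set s : ℝ := ‖star ψ ⬝ᵥ φ‖ with hsdef
    have hs0l : (0:ℝ) ≤ s := norm_nonneg _
    have hs0 : (0:ℝ) ≤ (1+s)/2 := by positivity
    have hs1 : (1+s)/2 ≤ 1 := by linarith [hlt.le]
    have hL := hS.2 (Matrix.vecMulVec ψ (star ψ)) (Matrix.vecMulVec φ (star φ))
      (rp_proj_density hψ) (rp_proj_density hφ) ((1:ℝ)/2) (by norm_num) (by norm_num)
    have hR := hS.2 (Matrix.vecMulVec c (star c)) (Matrix.vecMulVec e (star e))
      (rp_proj_density hc) (rp_proj_density he) ((1+s)/2) hs0 hs1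
    obtain ⟨c', hc', hSc⟩ := rp_pure_transfer hS hc
    have hτd : IsDensity (S (Matrix.vecMulVec e (star e))) :=
      hS.1.mapsTo (rp_proj_density he)
    have hE := hL.symm.trans ((congrArg S hdecomp).trans hR)
    rw [hA, hB, hSc] at hE
    have hEq := congrArg (fun M => star c' ⬝ᵥ (M *ᵥ c')) hE
    simp only [Matrix.add_mulVec, Matrix.smul_mulVec, dotProduct_add,
      dotProduct_smul, smul_eq_mul] at hEq
    rw [rp_proj_quad a c', rp_proj_quad b c', rp_proj_quad c' c', hc'] at hEq
    rw [rp_conj_mul_self_eq, rp_conj_mul_self_eq] at hEq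
    have hre := congrArg Complex.re hEq
    simp only [Complex.add_re, Complex.re_ofReal_mul, Complex.ofReal_re, _root_.map_one,
      Complex.one_re, mul_one] at hre
    have hq0 : 0 ≤ (star c' ⬝ᵥ (S (Matrix.vecMulVec e (star e)) *ᵥ c')).re := by
      have h := hτd.1.dotProduct_mulVec_nonneg c'
      rw [Complex.nonneg_iff] at h
      exact h.1
    have hkb := rp_key_bound ha hb hc'
    have hcoef : (0:ℝ) ≤ 1 - (1+s)/2 := by linarith
    rw [hsdef] at *
    nlinarith [hq0, hkb, hre, hcoef]
  · have hPP := rp_proj_eq_of_norm_dot_eq_one hψ hφ heq1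
    have hPb : Matrix.vecMulVec b (star b) = Matrix.vecMulVec a (star a) := by
      rw [← hB, hPP, hA]
    have h1 : (star a ⬝ᵥ b) * starRingEnd ℂ (star a ⬝ᵥ b) = 1 := by
      have h2 := rp_trace_proj_mul a b
      rw [hPb] at h2
      rw [← h2, rp_trace_proj_mul a a, ha]
      simp
    have h3 : (‖star a ⬝ᵥ b‖^2 : ℝ) = 1 := by
      have h4 : starRingEnd ℂ (star a ⬝ᵥ b) * (star a ⬝ᵥ b) = 1 := by
        rw [mul_comm]; exact h1
      rw [rp_conj_mul_self_eq] at h4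
      exact_mod_cast h4
    have h5 : ‖star a ⬝ᵥ b‖ = 1 := by nlinarith [norm_nonneg (star a ⬝ᵥ b)]
    rw [heq1, h5]

private lemma rp_inv_symmetry {m n : ℕ}
    {S : Matrix (Fin m) (Fin m) ℂ → Matrix (Fin n) (Fin n) ℂ}
    (hS : IsStateSymmetry S) :
    ∃ g : Matrix (Fin n) (Fin n) ℂ → Matrix (Fin m) (Fin m) ℂ, IsStateSymmetry g ∧
      ∀ ρ : Matrix (Fin m) (Fin m) ℂ, IsDensity ρ → g (S ρ) = ρ := by
  classical
  have hBij := hS.1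
  have hInv := hBij.invOn_invFunOn
  set g := Function.invFunOn S {ρ | IsDensity ρ} with hg
  have hmapsto : Set.MapsTo g {ρ | IsDensity ρ} {ρ | IsDensity ρ} :=
    hBij.surjOn.mapsTo_invFunOn
  have hright : ∀ ρ' ∈ {ρ : Matrix (Fin n) (Fin n) ℂ | IsDensity ρ}, S (g ρ') = ρ' :=
    fun ρ' hρ' => hInv.2 hρ'
  have hleft : ∀ ρ ∈ {ρ : Matrix (Fin m) (Fin m) ℂ | IsDensity ρ}, g (S ρ) = ρ :=
    fun ρ hρ => hInv.1 hρ
  refine ⟨g, ⟨?_, ?_⟩, fun ρ hρ => hleft ρ hρ⟩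
  · -- BijOn
    refine ⟨hmapsto, ?_, ?_⟩
    · -- InjOn
      intro x hx y hy hxy
      have := congrArg S hxy
      rwa [hright x hx, hright y hy] at this
    · -- SurjOn
      intro ρ hρ
      exact ⟨S ρ, hBij.mapsTo hρ, hleft ρ hρ⟩
  · -- affine
    intro ρ' σ' hρ' hσ' p hp0 hp1
    have hρs : IsDensity (g ρ') := hmapsto hρ'
    have hσs : IsDensity (g σ') := hmapsto hσ'
    have hmix := hS.2 (g ρ') (g σ') hρs hσs p hp0 hp1
    rw [hright ρ' hρ', hright σ' hσ'] at hmix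
    have hmixs : IsDensity ((p : ℂ) • g ρ' + ((1 - p : ℝ) : ℂ) • g σ') :=
      rp_density_convex hρs hσs hp0 hp1
    calc g ((p : ℂ) • ρ' + ((1 - p : ℝ) : ℂ) • σ')
        = g (S ((p : ℂ) • g ρ' + ((1 - p : ℝ) : ℂ) • g σ')) := by rw [hmix]
      _ = (p : ℂ) • g ρ' + ((1 - p : ℝ) : ℂ) • g σ' := hleft _ hmixs

end RayProductAux4
/-- A state space symmetry preserves the ray product:
`Tr[S(|ψ⟩⟨ψ|)·S(|φ⟩⟨φ|)] = |⟨ψ|φ⟩|²` for all unit vectors `ψ`, `φ`. -/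
theorem stateSymmetry_ray_product (m n : ℕ)
    (S : Matrix (Fin m) (Fin m) ℂ → Matrix (Fin n) (Fin n) ℂ)
    (hS : IsStateSymmetry S) :
    ∀ ψ φ : Fin m → ℂ, star ψ ⬝ᵥ ψ = 1 → star φ ⬝ᵥ φ = 1 →
      (S (Matrix.vecMulVec ψ (star ψ)) * S (Matrix.vecMulVec φ (star φ))).trace
        = (Complex.normSq (star ψ ⬝ᵥ φ) : ℂ) := by
  intro ψ φ hψ hφ
  obtain ⟨a, ha, hA⟩ := rp_pure_transfer hS hψ
  obtain ⟨b, hb, hB⟩ := rp_pure_transfer hS hφ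
  obtain ⟨g, hg, hginv⟩ := rp_inv_symmetry hS
  have h1 : ‖star ψ ⬝ᵥ φ‖ ≤ ‖star a ⬝ᵥ b‖ := rp_sym_mono hS hψ hφ ha hb hA hB
  have hgA : g (Matrix.vecMulVec a (star a)) = Matrix.vecMulVec ψ (star ψ) := by
    rw [← hA]; exact hginv _ (rp_proj_density hψ)
  have hgB : g (Matrix.vecMulVec b (star b)) = Matrix.vecMulVec φ (star φ) := by
    rw [← hB]; exact hginv _ (rp_proj_density hφ)
  have h2 : ‖star a ⬝ᵥ b‖ ≤ ‖star ψ ⬝ᵥ φ‖ := rp_sym_mono hg ha hb hψ hφ hgA hgB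
  have hnorm : ‖star a ⬝ᵥ b‖ = ‖star ψ ⬝ᵥ φ‖ := le_antisymm h2 h1
  rw [hA, hB, rp_trace_proj_mul, mul_comm, rp_conj_mul_self_eq, hnorm]
  have h3 : (‖star ψ ⬝ᵥ φ‖^2 : ℝ) = Complex.normSq (star ψ ⬝ᵥ φ) := by
    rw [Complex.normSq_eq_norm_sq]
  rw [h3]
end
end
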